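/- Let V be a category with coproducts, W a cocomplete category, J a small connected category, and F : J → [GV, GW] a functor such that each F(j) is a functor over Set and each F(α) is a natural transformation over Set. Then: (1) a colimit K of F may be chosen so that K is over Set; given such a choice, (2) if each F(j) is path-like then K is path-like, and (3) if each F(j) is distributive then K is distributive. -/

import Mathlib

open CategoryTheory Limits

noncomputable section

universe v₁ v₂ v₃ u₁ u₂ u₃

/-- A `V`-enriched graph: a set of objects together with a `V`-object of arrows
between any ordered pair of objects. -/
structure VGraph (V : Type u₁) [Category.{v₁} V] : Type (u₁ + 1) where
  objs : Type
  hom : objs → objs → V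

variable {V : Type u₁} [Category.{v₁} V] {W : Type u₂} [Category.{v₂} W]
  {Y : Type u₃} [Category.{v₃} Y]

/-- A morphism of `V`-enriched graphs. -/
structure GHom (X Z : VGraph V) : Type (max 1 v₁) where
  obj : X.objs → Z.objs
  map : ∀ a b : X.objs, X.hom a b ⟶ Z.hom (obj a) (obj b)

/-- The identity morphism of `V`-graphs. -/
def GHom.id (X : VGraph V) : GHom X X := ⟨fun a => a, fun _ _ => 𝟙 _⟩

/-- Composition of morphisms of `V`-graphs. -/
def GHom.comp {X Z T : VGraph V} (F : GHom X Z) (G : GHom Z T) : GHom X T :=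
  ⟨fun a => G.obj (F.obj a), fun a b => F.map a b ≫ G.map (F.obj a) (F.obj b)⟩

/-- A functor `GV ⥤ GW` over `Set`: it assigns to every `V`-graph `X` a `W`-graph with
the same set of objects (recorded by its homs only), functorially. -/
structure OverSetFunctor (V : Type u₁) [Category.{v₁} V] (W : Type u₂) [Category.{v₂} W] where
  hom : ∀ X : VGraph V, X.objs → X.objs → W
  map : ∀ {X Z : VGraph V} (F : GHom X Z) (a b : X.objs),
    hom X a b ⟶ hom Z (F.obj a) (F.obj b)
  map_id : ∀ (X : VGraph V) (a b : X.objs), map (GHom.id X) a b = 𝟙 (hom X a b)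
  map_comp : ∀ {X Z T : VGraph V} (F : GHom X Z) (G : GHom Z T) (a b : X.objs),
    map (F.comp G) a b = map F a b ≫ map G (F.obj a) (F.obj b)

section Seq
variable [HasInitial V]

/-- The `V`-graph associated to a finite sequence `(Z₁,…,Zₙ)` of objects of `V`:
objects `{0,…,n}`, hom from `i-1` to `i` equal to `Zᵢ`, all other homs initial. -/
abbrev seqGraph {n : ℕ} (Z : Fin n → V) : VGraph V :=
  ⟨Fin (n + 1), fun i j =>
    if h : (j : ℕ) = (i : ℕ) + 1 then Z ⟨(i : ℕ), by have := j.isLt; omega⟩ else ⊥_ V⟩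

/-- The functor `T̄ₙ` associated to a functor over `Set`:
`T̄(Z₁,…,Zₙ) = T(Z₁,…,Zₙ)(0,n)`. -/
def tbar (T : OverSetFunctor V W) {n : ℕ} (Z : Fin n → V) : W :=
  T.hom (seqGraph Z) 0 (Fin.last n)

theorem seqGraph_hom_pos {n : ℕ} (Z : Fin n → V) (a b : Fin (n + 1))
    (h : (b : ℕ) = (a : ℕ) + 1) :
    (seqGraph Z).hom a b = Z ⟨(a : ℕ), by have := b.isLt; omega⟩ := dif_pos h

theorem seqGraph_hom_neg {n : ℕ} (Z : Fin n → V) (a b : Fin (n + 1))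
    (h : ¬(b : ℕ) = (a : ℕ) + 1) :
    (seqGraph Z).hom a b = ⊥_ V := dif_neg h

/-- The morphism of sequence graphs induced by a family of morphisms. -/
def seqGHom {n : ℕ} {Z Z' : Fin n → V} (g : ∀ k, Z k ⟶ Z' k) :
    GHom (seqGraph Z) (seqGraph Z') where
  obj := fun a => a
  map a b :=
    if h : (b : ℕ) = (a : ℕ) + 1 then
      eqToHom (seqGraph_hom_pos Z a b h) ≫ g ⟨(a : ℕ), by have := b.isLt; omega⟩ ≫
        eqToHom (seqGraph_hom_pos Z' a b h).symm
    else eqToHom (by rw [seqGraph_hom_neg Z a b h, seqGraph_hom_neg Z' a b h])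

/-- The action of `tbar` on morphisms, in all variables at once. -/
def tbarMap (T : OverSetFunctor V W) {n : ℕ} {Z Z' : Fin n → V} (g : ∀ k, Z k ⟶ Z' k) :
    tbar T Z ⟶ tbar T Z' := by
  exact T.map (seqGHom g) 0 (Fin.last n)

/-- The morphism of graphs from a sequence graph of consecutive homs into `X`,
determined by a path `x₀, …, xₙ` in `X`. -/
def pathGHom (X : VGraph V) {n : ℕ} (x : Fin (n + 1) → X.objs) :
    GHom (seqGraph (fun k : Fin n => X.hom (x k.castSucc) (x k.succ))) X where
  obj := fun i => x i
  map a b :=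
    if h : (b : ℕ) = (a : ℕ) + 1 then
      eqToHom (seqGraph_hom_pos _ a b h) ≫
        eqToHom (by
          rw [show (Fin.succ ⟨(a : ℕ), by have := b.isLt; omega⟩ : Fin (n + 1)) = b from
            Fin.ext (by simp; omega)]
          rfl)
    else eqToHom (seqGraph_hom_neg _ a b h) ≫ initial.to _

end Seq

section PathLike
variable [HasInitial V] [HasCoproducts.{0} W]

/-- The type of paths from `a` to `b` in a `V`-graph `X`. -/
structure PathIdx (X : VGraph V) (a b : X.objs) : Type where
  n : ℕ
  pts : Fin (n + 1) → X.objs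
  h0 : pts 0 = a
  h1 : pts (Fin.last n) = b

/-- The canonical comparison map `∐ T̄ᵢ X(xᵢ₋₁,xᵢ) ⟶ TX(a,b)`. -/
def canonicalPathMap (T : OverSetFunctor V W) (X : VGraph V) (a b : X.objs) :
    (∐ fun p : PathIdx X a b =>
      tbar T (fun k : Fin p.n => X.hom (p.pts k.castSucc) (p.pts k.succ))) ⟶ T.hom X a b :=
  Sigma.desc fun p =>
    T.map (pathGHom X p.pts) 0 (Fin.last p.n) ≫
      eqToHom (show T.hom X (p.pts 0) (p.pts (Fin.last p.n)) = T.hom X a b by rw [p.h0, p.h1])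

/-- A functor over `Set` is path-like when all canonical maps
`∐ T̄ᵢ X(xᵢ₋₁,xᵢ) ⟶ TX(a,b)` are isomorphisms. -/
def OverSetFunctor.PathLike (T : OverSetFunctor V W) : Prop :=
  ∀ (X : VGraph V) (a b : X.objs), IsIso (canonicalPathMap T X a b)

end PathLike

section Distrib
variable [HasInitial V] [HasCoproducts.{0} V] [HasCoproducts.{0} W]

/-- The family of morphisms updating one component. -/
def updateHom {α : Type u₃} [DecidableEq α] (Z : α → V) (i : α) {v v' : V} (g : v ⟶ v') :
    ∀ j : α, Function.update Z i v j ⟶ Function.update Z i v' j := fun j =>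
  if h : j = i then
    eqToHom (by rw [h]; simp) ≫ g ≫ eqToHom (by rw [h]; simp)
  else eqToHom (by rw [Function.update_of_ne h, Function.update_of_ne h])

/-- A functor over `Set` is distributive when each `T̄ₙ` preserves coproducts in each
variable, as witnessed by the canonical comparison maps being isomorphisms. -/
def OverSetFunctor.Distrib (T : OverSetFunctor V W) : Prop :=
  ∀ (n : ℕ) (Z : Fin n → V) (i : Fin n) (ι : Type) (f : ι → V),
    IsIso (Sigma.desc fun k : ι =>
      (tbarMap T (updateHom Z i (Sigma.ι f k)) :
        tbar T (Function.update Z i (f k)) ⟶ tbar T (Function.update Z i (∐ f))))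

end Distrib


section Stmt8

variable {J : Type} [SmallCategory J]

/-- A diagram of shape `J` in the (meta)category of functors `GV ⥤ GW` over `Set`, all
of whose arrows are natural transformations over `Set`. -/
structure OSDiagram (J : Type) [SmallCategory J] (V : Type u₁) [Category.{v₁} V]
    (W : Type u₂) [Category.{v₂} W] where
  D : J → OverSetFunctor V W
  α : ∀ {j j' : J}, (j ⟶ j') → ∀ (X : VGraph V) (a b : X.objs),
    (D j).hom X a b ⟶ (D j').hom X a b
  α_natural : ∀ {j j' : J} (f : j ⟶ j') {X Z : VGraph V} (F : GHom X Z) (a b : X.objs),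
    (D j).map F a b ≫ α f Z (F.obj a) (F.obj b) = α f X a b ≫ (D j').map F a b
  α_id : ∀ (j : J) (X : VGraph V) (a b : X.objs), α (𝟙 j) X a b = 𝟙 _
  α_comp : ∀ {j j' j'' : J} (f : j ⟶ j') (g : j' ⟶ j'') (X : VGraph V) (a b : X.objs),
    α (f ≫ g) X a b = α f X a b ≫ α g X a b

/-- A cocone over such a diagram whose vertex is again a functor over `Set`. -/
structure OSCocone (𝒟 : OSDiagram J V W) where
  K : OverSetFunctor V W
  ι : ∀ (j : J) (X : VGraph V) (a b : X.objs), (𝒟.D j).hom X a b ⟶ K.hom X a b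
  ι_natural : ∀ (j : J) {X Z : VGraph V} (F : GHom X Z) (a b : X.objs),
    (𝒟.D j).map F a b ≫ ι j Z (F.obj a) (F.obj b) = ι j X a b ≫ K.map F a b
  ι_cocone : ∀ {j j' : J} (f : j ⟶ j') (X : VGraph V) (a b : X.objs),
    𝒟.α f X a b ≫ ι j' X a b = ι j X a b

/-- The hom-wise diagram in `W` underlying a diagram of functors over `Set`. -/
def OSDiagram.homFunctor (𝒟 : OSDiagram J V W) (X : VGraph V) (a b : X.objs) : J ⥤ W where
  obj j := (𝒟.D j).hom X a b
  map f := 𝒟.α f X a b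
  map_id j := 𝒟.α_id j X a b
  map_comp f g := 𝒟.α_comp f g X a b

/-- A cocone of functors over `Set` is colimiting when it is a colimit hom-wise. -/
def OSCocone.IsColimiting {𝒟 : OSDiagram J V W} (c : OSCocone 𝒟) : Prop :=
  ∀ (X : VGraph V) (a b : X.objs),
    Nonempty (IsColimit (Cocone.mk (c.K.hom X a b)
      { app := fun j => c.ι j X a b
        naturality := by
          intro j j' f
          dsimp [OSDiagram.homFunctor]
          rw [Category.comp_id]
          exact c.ι_cocone f X a b } : Cocone (𝒟.homFunctor X a b)))

section MyAux

variable [HasColimits W] (𝒟 : OSDiagram J V W)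

/-- The natural transformation between hom-functors induced by a graph morphism. -/
def OSDiagram.natTransOf {X Z : VGraph V} (F : GHom X Z) (a b : X.objs) :
    𝒟.homFunctor X a b ⟶ 𝒟.homFunctor Z (F.obj a) (F.obj b) where
  app j := (𝒟.D j).map F a b
  naturality j j' f := (𝒟.α_natural f F a b).symm

/-- The pointwise colimit cocone over an `OSDiagram`. -/
def OSDiagram.colimitOSCocone : OSCocone 𝒟 where
  K :=
    { hom := fun X a b => colimit (𝒟.homFunctor X a b)
      map := fun {X Z} F a b => colimMap (𝒟.natTransOf F a b)
      map_id := by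
        intro X a b
        apply colimit.hom_ext
        intro j
        rw [ι_colimMap]
        have : (𝒟.natTransOf (GHom.id X) a b).app j = 𝟙 _ := (𝒟.D j).map_id X a b
        rw [this]
        exact (Category.id_comp _).trans (Category.comp_id _).symm
      map_comp := by
        intro X Z T F G a b
        apply colimit.hom_ext
        intro j
        rw [ι_colimMap]
        have : (𝒟.natTransOf (F.comp G) a b).app j =
            (𝒟.natTransOf F a b).app j ≫ (𝒟.natTransOf G (F.obj a) (F.obj b)).app j :=
          (𝒟.D j).map_comp F G a b
        rw [this]
        erw [ι_colimMap_assoc, ι_colimMap, Category.assoc]; rfl }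
  ι := fun j X a b => colimit.ι (𝒟.homFunctor X a b) j
  ι_natural := by
    intro j X Z F a b
    exact (ι_colimMap (𝒟.natTransOf F a b) j).symm
  ι_cocone := fun f X a b => colimit.w (𝒟.homFunctor X a b) f

theorem OSDiagram.colimitOSCocone_isColimiting : 𝒟.colimitOSCocone.IsColimiting := by
  intro X a b
  exact ⟨{ desc := fun s => colimit.desc (𝒟.homFunctor X a b) s
           fac := fun s j => colimit.ι_desc s j
           uniq := fun s m w => colimit.hom_ext fun j => by
             rw [colimit.ι_desc]; exact w j }⟩

/-- The key lemma: a canonical `Sigma.desc` comparison map into the colimit is an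
isomorphism as soon as it is one at each stage of the diagram. -/
theorem key_lemma (c : OSCocone 𝒟) (hc : c.IsColimiting)
    (X : VGraph V) (a b : X.objs) {P : Type} {SX : P → VGraph V}
    (F : ∀ p, GHom (SX p) X) (u v : ∀ p, (SX p).objs)
    (ha : ∀ p, (F p).obj (u p) = a) (hb : ∀ p, (F p).obj (v p) = b)
    (hiso : ∀ j : J, IsIso (Sigma.desc fun p => (𝒟.D j).map (F p) (u p) (v p) ≫
        eqToHom (show (𝒟.D j).hom X ((F p).obj (u p)) ((F p).obj (v p)) = (𝒟.D j).hom X a b by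
          rw [ha p, hb p]))) :
    IsIso (Sigma.desc fun p => c.K.map (F p) (u p) (v p) ≫
        eqToHom (show c.K.hom X ((F p).obj (u p)) ((F p).obj (v p)) = c.K.hom X a b by
          rw [ha p, hb p])) := by
  classical
  have ecomm : ∀ (A B : X.objs → X.objs → W) (φ : ∀ x y, A x y ⟶ B x y)
      {a' b' : X.objs} (h1 : a' = a) (h2 : b' = b),
      φ a' b' ≫ eqToHom (show B a' b' = B a b by rw [h1, h2]) =
        eqToHom (show A a' b' = A a b by rw [h1, h2]) ≫ φ a b := by
    intro A B φ a' b' h1 h2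
    subst h1; subst h2; simp
  let G : J ⥤ W :=
    { obj := fun j => ∐ fun p => (𝒟.D j).hom (SX p) (u p) (v p)
      map := fun {j j'} f => Limits.Sigma.map fun p => 𝒟.α f (SX p) (u p) (v p)
      map_id := by intro j; ext p; simp [𝒟.α_id]
      map_comp := by intro j j' j'' f g; ext p; simp [𝒟.α_comp] }
  let sG : Cocone G :=
    { pt := ∐ fun p => c.K.hom (SX p) (u p) (v p)
      ι :=
        { app := fun j => Limits.Sigma.map fun p => c.ι j (SX p) (u p) (v p)
          naturality := by
            intro j j' f
            have key : (Limits.Sigma.map fun p => 𝒟.α f (SX p) (u p) (v p)) ≫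
                (Limits.Sigma.map fun p => c.ι j' (SX p) (u p) (v p)) =
                Limits.Sigma.map fun p => c.ι j (SX p) (u p) (v p) := by
              rw [Sigma.map_comp_map]
              congr 1
              funext p
              exact c.ι_cocone f (SX p) (u p) (v p)
            simpa using key } }
  have hP : ∀ p : P, IsColimit (Cocone.mk (c.K.hom (SX p) (u p) (v p))
      { app := fun j => c.ι j (SX p) (u p) (v p)
        naturality := by
          intro j j' f
          dsimp [OSDiagram.homFunctor]
          rw [Category.comp_id]
          exact c.ι_cocone f (SX p) (u p) (v p) } : Cocone (𝒟.homFunctor (SX p) (u p) (v p))) :=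
    fun p => (hc (SX p) (u p) (v p)).some
  have hsG : IsColimit sG :=
    { desc := fun s => Sigma.desc fun p => (hP p).desc
        { pt := s.pt
          ι :=
            { app := fun j => Sigma.ι (fun q => (𝒟.D j).hom (SX q) (u q) (v q)) p ≫ s.ι.app j
              naturality := by
                intro j j' f
                have hs := s.ι.naturality f
                dsimp at hs ⊢
                rw [Category.comp_id] at hs ⊢
                rw [← hs]
                simp [G, OSDiagram.homFunctor] } }
      fac := by
        intro s j
        ext p
        simp only [sG, Sigma.ι_map_assoc, ι_colimMap_assoc, Discrete.natTrans_app, colimit.ι_desc, Cofan.mk_pt,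
          Cofan.mk_ι_app, Category.assoc]
        exact (hP p).fac _ j
      uniq := by
        intro s m w
        ext p
        apply (hP p).hom_ext
        intro j
        have h1 : c.ι j (SX p) (u p) (v p) ≫
            Sigma.ι (fun q => c.K.hom (SX q) (u q) (v q)) p ≫ m =
            Sigma.ι (fun q => (𝒟.D j).hom (SX q) (u q) (v q)) p ≫ s.ι.app j := by
          rw [← w j]
          simp [sG]
        simp only [colimit.ι_desc, Cofan.mk_pt, Cofan.mk_ι_app]
        erw [h1]
        rw [(hP p).fac]; rfl }
  let θ : ∀ j : J, G.obj j ⟶ (𝒟.homFunctor X a b).obj j := fun j =>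
    Sigma.desc fun p => (𝒟.D j).map (F p) (u p) (v p) ≫
      eqToHom (show (𝒟.D j).hom X ((F p).obj (u p)) ((F p).obj (v p)) = (𝒟.D j).hom X a b by
        rw [ha p, hb p])
  have θnat : ∀ {j j' : J} (f : j ⟶ j'), G.map f ≫ θ j' = θ j ≫ 𝒟.α f X a b := by
    intro j j' f
    ext p
    simp only [G, θ, Sigma.ι_map_assoc, ι_colimMap_assoc, Discrete.natTrans_app, colimit.ι_desc, Cofan.mk_pt, Cofan.mk_ι_app,
      Category.assoc]
    erw [← Category.assoc, ← 𝒟.α_natural f (F p) (u p) (v p), Category.assoc,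
      ecomm ((𝒟.D j).hom X) ((𝒟.D j').hom X) (fun x y => 𝒟.α f X x y) (ha p) (hb p)]
    erw [Sigma.ι_desc_assoc, Category.assoc]
    rfl
  have hiso' : ∀ j : J, IsIso (θ j) := hiso
  let θiso : G ≅ 𝒟.homFunctor X a b :=
    NatIso.ofComponents (fun j => @asIso _ _ _ _ (θ j) (hiso' j)) (fun f => θnat f)
  let cXc : Cocone (𝒟.homFunctor X a b) :=
    Cocone.mk (c.K.hom X a b)
      { app := fun j => c.ι j X a b
        naturality := by
          intro j j' f
          dsimp [OSDiagram.homFunctor]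
          rw [Category.comp_id]
          exact c.ι_cocone f X a b }
  have hX : IsColimit cXc := (hc X a b).some
  let tG : Cocone G := (Cocone.precompose θiso.hom).obj cXc
  have htG : IsColimit tG := (IsColimit.precomposeHomEquiv θiso cXc).symm hX
  have hdesc : (Sigma.desc fun p => c.K.map (F p) (u p) (v p) ≫
      eqToHom (show c.K.hom X ((F p).obj (u p)) ((F p).obj (v p)) = c.K.hom X a b by
        rw [ha p, hb p])) = hsG.desc tG := by
    refine hsG.uniq tG _ fun j => ?_
    ext p
    simp only [sG, tG, θ, θiso, cXc, Sigma.ι_map_assoc, ι_colimMap_assoc, Discrete.natTrans_app, colimit.ι_desc, Cofan.mk_pt,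
      Cofan.mk_ι_app, Category.assoc, Cocone.precompose_obj_ι, NatTrans.comp_app,
      NatIso.ofComponents_hom_app, asIso_hom, colimit.ι_desc_assoc]
    rw [← Category.assoc, ← c.ι_natural j (F p) (u p) (v p), Category.assoc,
      ecomm ((𝒟.D j).hom X) (c.K.hom X) (fun x y => c.ι j X x y) (ha p) (hb p)]
    change _ = Sigma.ι _ p ≫ θ j ≫ c.ι j X a b
    erw [Sigma.ι_desc_assoc, Category.assoc]
    rfl
  rw [hdesc]
  have h1 : hsG.desc tG ≫ htG.desc sG = 𝟙 sG.pt := by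
    apply hsG.hom_ext
    intro j
    rw [← Category.assoc, hsG.fac, htG.fac]
    simp
  have h2 : htG.desc sG ≫ hsG.desc tG = 𝟙 tG.pt := by
    apply htG.hom_ext
    intro j
    rw [← Category.assoc, htG.fac, hsG.fac]
    simp
  exact ⟨htG.desc sG, h1, h2⟩

end MyAux

/-- Connected colimits of functors over `Set` may be chosen over `Set`; such a colimit
is path-like (resp. distributive) as soon as all the functors of the diagram are. -/
theorem colimit_overSet_pathLike_distributive
    [IsConnected J] [HasInitial V] [HasCoproducts.{0} V] [HasColimits W]
    (𝒟 : OSDiagram J V W) :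
    (∃ c : OSCocone 𝒟, c.IsColimiting) ∧
    ∀ c : OSCocone 𝒟, c.IsColimiting →
      ((∀ j, (𝒟.D j).PathLike) → c.K.PathLike) ∧
      ((∀ j, (𝒟.D j).Distrib) → c.K.Distrib) := by
  constructor
  · exact ⟨𝒟.colimitOSCocone, 𝒟.colimitOSCocone_isColimiting⟩
  · intro c hc
    constructor
    · intro hpl X a b
      exact key_lemma 𝒟 c hc X a b (fun p : PathIdx X a b => pathGHom X p.pts)
        (fun p => 0) (fun p => Fin.last p.n) (fun p => p.h0) (fun p => p.h1)
        (fun j => hpl j X a b)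
    · intro hd n Z i ι f
      have key := key_lemma 𝒟 c hc (seqGraph (Function.update Z i (∐ f))) 0 (Fin.last n)
        (fun k : ι => seqGHom (updateHom Z i (Sigma.ι f k)))
        (fun _ => 0) (fun _ => Fin.last n) (fun _ => rfl) (fun _ => rfl)
        (fun j => by
          have := hd j n Z i ι f
          have this' : IsIso (Sigma.desc fun k =>
              tbarMap (𝒟.D j) (updateHom Z i (Sigma.ι f k)) ≫ 𝟙 _) := by
            simpa using this
          exact this')
      have key' : IsIso (Sigma.desc fun k =>
          tbarMap c.K (updateHom Z i (Sigma.ι f k)) ≫ 𝟙 _) := key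
      simpa using key'

end Stmt8
end
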